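/- arXiv:1708.05280 — 5 statements merged into one kernel-verified Lean document; each statement's English description precedes it below -/
import Mathlib

section
/- Let c : [0,L] → ℝ³ be twice differentiable with ‖c'(s)‖ = 1 for all s, and let v : [0,L] → ℝ³ be a differentiable solution of the frame ODE v'(s) = -(c''(s)·v(s)) c'(s) with ‖v(0)‖ = 1 and v(0)·c'(0) = 0. Then for every s ∈ [0,L], the triple {c'(s), v(s), c'(s) × v(s)} is an orthonormal set in ℝ³: ‖v(s)‖ = 1, v(s)·c'(s) = 0, ‖c'(s) × v(s)‖ = 1, (c'(s) × v(s))·c'(s) = 0 and (c'(s) × v(s))·v(s) = 0. -/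
open scoped RealInnerProductSpace

/-- The cross product on `ℝ³`. -/
noncomputable def cross3 (a b : EuclideanSpace ℝ (Fin 3)) : EuclideanSpace ℝ (Fin 3) :=
  WithLp.toLp 2 ![a 1 * b 2 - a 2 * b 1, a 2 * b 0 - a 0 * b 2, a 0 * b 1 - a 1 * b 0]

lemma cross3_inner_left (a b : EuclideanSpace ℝ (Fin 3)) : ⟪cross3 a b, a⟫ = 0 := by
  simp [cross3, PiLp.inner_apply, Fin.sum_univ_three, RCLike.inner_apply]
  ring

lemma cross3_inner_right (a b : EuclideanSpace ℝ (Fin 3)) : ⟪cross3 a b, b⟫ = 0 := by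
  simp [cross3, PiLp.inner_apply, Fin.sum_univ_three, RCLike.inner_apply]
  ring

lemma cross3_self_inner (a b : EuclideanSpace ℝ (Fin 3)) :
    ⟪cross3 a b, cross3 a b⟫ = ⟪a, a⟫ * ⟪b, b⟫ - ⟪a, b⟫ * ⟪a, b⟫ := by
  simp [cross3, PiLp.inner_apply, Fin.sum_univ_three, RCLike.inner_apply, -inner_self_eq_norm_sq_to_K]
  ring

/-- For an arc-length parameterized curve `c`, a solution `v` of the frame ODE with
unit initial value orthogonal to the tangent yields an orthonormal frame
`{c'(s), v(s), c'(s) × v(s)}` for every `s ∈ [0,L]`. -/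
theorem frame_ode_orthonormal_frame
    (L : ℝ) (hL : 0 ≤ L)
    (c c' c'' v : ℝ → EuclideanSpace ℝ (Fin 3))
    (hc : ∀ s ∈ Set.Icc 0 L, HasDerivAt c (c' s) s)
    (hc' : ∀ s ∈ Set.Icc 0 L, HasDerivAt c' (c'' s) s)
    (hunit : ∀ s ∈ Set.Icc 0 L, ‖c' s‖ = 1)
    (hv : ∀ s ∈ Set.Icc 0 L, HasDerivAt v (-⟪c'' s, v s⟫ • c' s) s)
    (hv0norm : ‖v 0‖ = 1) (hv0 : ⟪v 0, c' 0⟫ = 0) :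
    ∀ s ∈ Set.Icc 0 L,
      ‖v s‖ = 1 ∧ ⟪v s, c' s⟫ = 0 ∧ ‖cross3 (c' s) (v s)‖ = 1 ∧
        ⟪cross3 (c' s) (v s), c' s⟫ = 0 ∧ ⟪cross3 (c' s) (v s), v s⟫ = 0 := by
  have hcc : ∀ s ∈ Set.Icc 0 L, ⟪c' s, c' s⟫ = 1 := by
    intro s hs
    rw [real_inner_self_eq_norm_sq, hunit s hs]; norm_num
  set g : ℝ → ℝ := fun s => ⟪v s, c' s⟫ with hgdef
  have hgderiv : ∀ s ∈ Set.Icc 0 L, HasDerivAt g 0 s := by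
    intro s hs
    have h := HasDerivAt.inner (𝕜 := ℝ) (hv s hs) (hc' s hs)
    refine h.congr_deriv ?_
    rw [real_inner_smul_left, hcc s hs, real_inner_comm (v s) (c'' s)]
    ring
  have hgconst : ∀ s ∈ Set.Icc 0 L, g s = 0 := by
    have hcont : ContinuousOn g (Set.Icc 0 L) := fun s hs =>
      ((hgderiv s hs).continuousAt).continuousWithinAt
    have h := constant_of_has_deriv_right_zero hcont (fun x hx =>
      ((hgderiv x (Set.mem_Icc_of_Ico hx)).hasDerivWithinAt))
    intro s hs
    rw [h s hs]; exact hv0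
  set f : ℝ → ℝ := fun s => ⟪v s, v s⟫ with hfdef
  have hfderiv : ∀ s ∈ Set.Icc 0 L, HasDerivAt f 0 s := by
    intro s hs
    have h := HasDerivAt.inner (𝕜 := ℝ) (hv s hs) (hv s hs)
    refine h.congr_deriv ?_
    have hg0 : ⟪v s, c' s⟫ = 0 := hgconst s hs
    have hg0' : ⟪c' s, v s⟫ = 0 := by rw [real_inner_comm]; exact hg0
    rw [real_inner_smul_left, real_inner_smul_right, hg0, hg0']
    ring
  have hfconst : ∀ s ∈ Set.Icc 0 L, f s = 1 := by
    have hcont : ContinuousOn f (Set.Icc 0 L) := fun s hs =>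
      ((hfderiv s hs).continuousAt).continuousWithinAt
    have h := constant_of_has_deriv_right_zero hcont (fun x hx =>
      ((hfderiv x (Set.mem_Icc_of_Ico hx)).hasDerivWithinAt))
    intro s hs
    rw [h s hs, hfdef]
    simp only [real_inner_self_eq_norm_sq, hv0norm]; norm_num
  intro s hs
  have hvv : ⟪v s, v s⟫ = 1 := hfconst s hs
  have hvc : ⟪v s, c' s⟫ = 0 := hgconst s hs
  have hvnorm : ‖v s‖ = 1 := by
    have := hvv
    rw [real_inner_self_eq_norm_sq] at this
    nlinarith [norm_nonneg (v s)]
  refine ⟨hvnorm, hvc, ?_, cross3_inner_left _ _, cross3_inner_right _ _⟩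
  have hw : ⟪cross3 (c' s) (v s), cross3 (c' s) (v s)⟫ = 1 := by
    have hvc' : ⟪c' s, v s⟫ = 0 := by rw [real_inner_comm]; exact hvc
    rw [cross3_self_inner, hcc s hs, hvv, hvc']
    ring
  rw [real_inner_self_eq_norm_sq] at hw
  nlinarith [norm_nonneg (cross3 (c' s) (v s))]
end

section
/- Let c : [0,L] → ℝ³ be twice continuously differentiable with ‖c'(s)‖ = 1 for all s and c'(0) = (0,0,1). Suppose e₁ : ℝ × [0,L] → ℝ³ is such that for every θ the map s ↦ e₁(θ,s) is differentiable, solves the frame ODE ∂ₛe₁(θ,s) = -(c''(s)·e₁(θ,s)) c'(s), and satisfies e₁(θ,0) = (cos θ, sin θ, 0). Define e₂(θ,s) = c'(s) × e₁(θ,s). Then for every θ and every s ∈ [0,L], the partial derivatives in θ exist and satisfy ∂_θ e₁(θ,s) = e₂(θ,s) and ∂_θ e₂(θ,s) = -e₁(θ,s). -/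
open scoped RealInnerProductSpace

private abbrev E3 := EuclideanSpace ℝ (Fin 3)

private lemma cross3_apply0 (a b : E3) : cross3 a b 0 = a 1 * b 2 - a 2 * b 1 := rfl
private lemma cross3_apply1 (a b : E3) : cross3 a b 1 = a 2 * b 0 - a 0 * b 2 := rfl
private lemma cross3_apply2 (a b : E3) : cross3 a b 2 = a 0 * b 1 - a 1 * b 0 := rfl

private lemma inner3 (a b : E3) : ⟪a, b⟫ = a 0 * b 0 + a 1 * b 1 + a 2 * b 2 := by
  simp [PiLp.inner_apply, Fin.sum_univ_three, RCLike.inner_apply, mul_comm]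

private lemma E3_ext {a b : E3} (h0 : a 0 = b 0) (h1 : a 1 = b 1) (h2 : a 2 = b 2) : a = b := by
  ext i; fin_cases i <;> assumption

private lemma E3_add_apply (a b : E3) (i : Fin 3) : (a + b) i = a i + b i := rfl
private lemma E3_smul_apply (r : ℝ) (a : E3) (i : Fin 3) : (r • a) i = r * a i := rfl
private lemma E3_neg_apply (a : E3) (i : Fin 3) : (-a) i = -(a i) := rfl

private lemma hasDerivAt_E3 {f : ℝ → E3} {f' : E3} {t : ℝ}
    (h : ∀ i, HasDerivAt (fun u => f u i) (f' i) t) : HasDerivAt f f' t := by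
  have h1 : HasDerivAt (fun u => (EuclideanSpace.equiv (Fin 3) ℝ) (f u)) (fun i => f' i) t :=
    hasDerivAt_pi.2 h
  exact (((EuclideanSpace.equiv (Fin 3) ℝ).symm :
      (Fin 3 → ℝ) →L[ℝ] E3).hasFDerivAt).comp_hasDerivAt t h1

private lemma hasDerivAt_E3_coord {f : ℝ → E3} {f' : E3} {t : ℝ} (h : HasDerivAt f f' t)
    (i : Fin 3) : HasDerivAt (fun u => f u i) (f' i) t :=
  ((EuclideanSpace.proj i : E3 →L[ℝ] ℝ).hasFDerivAt).comp_hasDerivAt t h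

private lemma hasDerivAt_cross3 {a b : ℝ → E3} {a' b' : E3} {t : ℝ}
    (ha : HasDerivAt a a' t) (hb : HasDerivAt b b' t) :
    HasDerivAt (fun u => cross3 (a u) (b u)) (cross3 a' (b t) + cross3 (a t) b') t := by
  apply hasDerivAt_E3
  intro i
  have A := fun j => hasDerivAt_E3_coord ha j
  have B := fun j => hasDerivAt_E3_coord hb j
  fin_cases i
  · have := ((A 1).mul (B 2)).sub ((A 2).mul (B 1))
    simp [cross3_apply0, E3_add_apply]; exact this.congr_deriv (by ring)
  · have := ((A 2).mul (B 0)).sub ((A 0).mul (B 2))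
    simp [cross3_apply1, E3_add_apply]; exact this.congr_deriv (by ring)
  · have := ((A 0).mul (B 1)).sub ((A 1).mul (B 0))
    simp [cross3_apply2, E3_add_apply]; exact this.congr_deriv (by ring)

private lemma cross3_self (a : E3) : cross3 a a = 0 := by
  apply E3_ext <;> simp [cross3_apply0, cross3_apply1, cross3_apply2] <;> ring

private lemma cross3_smul_right (r : ℝ) (a b : E3) : cross3 a (r • b) = r • cross3 a b := by
  apply E3_ext <;>
    simp only [cross3_apply0, cross3_apply1, cross3_apply2, E3_smul_apply] <;> ring

private lemma cross3_add_right (a b c : E3) : cross3 a (b + c) = cross3 a b + cross3 a c := by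
  apply E3_ext <;>
    simp only [cross3_apply0, cross3_apply1, cross3_apply2, E3_add_apply] <;> ring

private lemma key_identity (a b e : E3) (hb : ⟪b, b⟫ = 1) (hab : ⟪a, b⟫ = 0) (hbe : ⟪b, e⟫ = 0) :
    cross3 a e = -⟪a, cross3 b e⟫ • b := by
  rw [inner3] at hb hab hbe
  rw [inner3]
  apply E3_ext <;>
    simp only [cross3_apply0, cross3_apply1, cross3_apply2, E3_smul_apply, E3_neg_apply,
      neg_smul, neg_mul]
  · linear_combination (a 2 * e 1 - a 1 * e 2) * hb + (b 1 * e 2 - b 2 * e 1) * hab +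
      (a 1 * b 2 - a 2 * b 1) * hbe
  · linear_combination (a 0 * e 2 - a 2 * e 0) * hb + (b 2 * e 0 - b 0 * e 2) * hab +
      (a 2 * b 0 - a 0 * b 2) * hbe
  · linear_combination (a 1 * e 0 - a 0 * e 1) * hb + (b 0 * e 1 - b 1 * e 0) * hab +
      (a 0 * b 1 - a 1 * b 0) * hbe

private lemma frame_ode_unique (L : ℝ) (c' c'' : ℝ → E3)
    (hc'cont : ContinuousOn c' (Set.Icc 0 L)) (hc''cont : ContinuousOn c'' (Set.Icc 0 L))
    (f g : ℝ → E3)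
    (hf : ∀ s ∈ Set.Icc 0 L, HasDerivAt f (-⟪c'' s, f s⟫ • c' s) s)
    (hg : ∀ s ∈ Set.Icc 0 L, HasDerivAt g (-⟪c'' s, g s⟫ • c' s) s)
    (h0 : f 0 = g 0) : Set.EqOn f g (Set.Icc 0 L) := by
  rcases lt_or_ge L 0 with hL | hL
  · rw [Set.Icc_eq_empty_of_lt hL]; exact fun t ht => ht.elim
  set p : ℝ → ℝ := fun t => max 0 (min t L) with hp
  have hpm : ∀ t, p t ∈ Set.Icc 0 L := fun t =>
    ⟨le_max_left _ _, max_le hL (min_le_right _ _)⟩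
  have hpe : ∀ t ∈ Set.Icc (0:ℝ) L, p t = t := by
    intro t ht
    simp only [hp, min_eq_left ht.2, max_eq_right ht.1]
  obtain ⟨M, hM⟩ := IsCompact.exists_bound_of_continuousOn isCompact_Icc
    (f := fun t => ‖c'' t‖ * ‖c' t‖)
    ((hc''cont.norm).mul (hc'cont.norm))
  have hM' : ∀ t ∈ Set.Icc 0 L, ‖c'' t‖ * ‖c' t‖ ≤ M := by
    intro t ht
    have := hM t ht
    rw [Real.norm_eq_abs] at this
    exact (le_abs_self _).trans this
  set v : ℝ → E3 → E3 := fun t x => -⟪c'' (p t), x⟫ • c' (p t) with hv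
  have hlip : ∀ t, LipschitzWith (Real.toNNReal M) (v t) := by
    intro t
    apply LipschitzWith.of_dist_le_mul
    intro x y
    rw [dist_eq_norm, dist_eq_norm]
    have hsub : v t x - v t y = (-⟪c'' (p t), x - y⟫) • c' (p t) := by
      simp only [hv, inner_sub_right]
      module
    rw [hsub, norm_smul, Real.norm_eq_abs, abs_neg]
    calc |⟪c'' (p t), x - y⟫| * ‖c' (p t)‖
        ≤ (‖c'' (p t)‖ * ‖x - y‖) * ‖c' (p t)‖ := by
          gcongr
          exact abs_real_inner_le_norm _ _
      _ = (‖c'' (p t)‖ * ‖c' (p t)‖) * ‖x - y‖ := by ring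
      _ ≤ (Real.toNNReal M : ℝ) * ‖x - y‖ := by
          gcongr
          exact (hM' _ (hpm t)).trans (Real.le_coe_toNNReal M)
  have hfc : ContinuousOn f (Set.Icc 0 L) :=
    fun t ht => (hf t ht).continuousAt.continuousWithinAt
  have hgc : ContinuousOn g (Set.Icc 0 L) :=
    fun t ht => (hg t ht).continuousAt.continuousWithinAt
  apply ODE_solution_unique hlip hfc ?_ hgc ?_ h0
  · intro t ht
    have ht' := Set.Ico_subset_Icc_self ht
    have := (hf t ht').hasDerivWithinAt (s := Set.Ici t)
    simpa only [hv, hpe t ht'] using this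
  · intro t ht
    have ht' := Set.Ico_subset_Icc_self ht
    have := (hg t ht').hasDerivWithinAt (s := Set.Ici t)
    simpa only [hv, hpe t ht'] using this


/-- For the rotation-minimizing frame `e₁(θ,·)` solving the frame ODE with initial value
`(cos θ, sin θ, 0)`, and `e₂ = c' × e₁`, the `θ`-derivatives satisfy
`∂_θ e₁ = e₂` and `∂_θ e₂ = -e₁`. -/
theorem theta_derivatives_of_frame
    (L : ℝ) (hL : 0 ≤ L)
    (c c' c'' : ℝ → EuclideanSpace ℝ (Fin 3))
    (e₁ : ℝ → ℝ → EuclideanSpace ℝ (Fin 3))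
    (hc : ∀ s ∈ Set.Icc 0 L, HasDerivAt c (c' s) s)
    (hc' : ∀ s ∈ Set.Icc 0 L, HasDerivAt c' (c'' s) s)
    (hc''cont : ContinuousOn c'' (Set.Icc 0 L))
    (hunit : ∀ s ∈ Set.Icc 0 L, ‖c' s‖ = 1)
    (hc'0 : c' 0 = ![(0 : ℝ), 0, 1])
    (he₁ : ∀ θ : ℝ, ∀ s ∈ Set.Icc 0 L,
      HasDerivAt (e₁ θ) (-⟪c'' s, e₁ θ s⟫ • c' s) s)
    (he₁0 : ∀ θ : ℝ, e₁ θ 0 = ![Real.cos θ, Real.sin θ, 0]) :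
    ∀ θ : ℝ, ∀ s ∈ Set.Icc 0 L,
      HasDerivAt (fun φ => e₁ φ s) (cross3 (c' s) (e₁ θ s)) θ ∧
        HasDerivAt (fun φ => cross3 (c' s) (e₁ φ s)) (-(e₁ θ s)) θ := by
  intro θ s hs
  have hc'0' : c' 0 = (WithLp.toLp 2 ![(0 : ℝ), 0, 1] : EuclideanSpace ℝ (Fin 3)) := by
    rw [← hc'0]
  have he₁0' : ∀ θ : ℝ, e₁ θ 0 =
      (WithLp.toLp 2 ![Real.cos θ, Real.sin θ, 0] : EuclideanSpace ℝ (Fin 3)) := fun θ => by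
    rw [← he₁0 θ]
  suffices h : (∀ φ : ℝ, e₁ φ s = Real.cos φ • e₁ 0 s + Real.sin φ • e₁ (Real.pi / 2) s) ∧
      cross3 (c' s) (e₁ 0 s) = e₁ (Real.pi / 2) s ∧
      cross3 (c' s) (e₁ (Real.pi / 2) s) = -(e₁ 0 s) by
    obtain ⟨hrep, hE, hF⟩ := h
    set u := e₁ 0 s with hu
    set v := e₁ (Real.pi / 2) s with hv
    have hfun1 : (fun φ => e₁ φ s) = fun φ => Real.cos φ • u + Real.sin φ • v :=
      funext fun φ => hrep φ
    have hfun2 : (fun φ => cross3 (c' s) (e₁ φ s))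
        = fun φ => Real.cos φ • v + Real.sin φ • (-u) := by
      funext φ
      rw [hrep φ, cross3_add_right, cross3_smul_right, cross3_smul_right, hE, hF]
    constructor
    · rw [hfun1]
      have hd : HasDerivAt (fun φ => Real.cos φ • u + Real.sin φ • v)
          ((-Real.sin θ) • u + Real.cos θ • v) θ :=
        ((Real.hasDerivAt_cos θ).smul_const u).add ((Real.hasDerivAt_sin θ).smul_const v)
      have hval : cross3 (c' s) (e₁ θ s) = (-Real.sin θ) • u + Real.cos θ • v := by
        rw [hrep θ, cross3_add_right, cross3_smul_right, cross3_smul_right, hE, hF]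
        module
      rw [hval]
      exact hd
    · rw [hfun2]
      have hd : HasDerivAt (fun φ => Real.cos φ • v + Real.sin φ • (-u))
          ((-Real.sin θ) • v + Real.cos θ • (-u)) θ :=
        ((Real.hasDerivAt_cos θ).smul_const v).add ((Real.hasDerivAt_sin θ).smul_const (-u))
      have hval : -(e₁ θ s) = (-Real.sin θ) • v + Real.cos θ • (-u) := by
        rw [hrep θ]
        module
      rw [hval]
      exact hd
  rcases eq_or_lt_of_le hL with hL0 | hL0
  · -- L = 0, so s = 0
    have hs0 : s = 0 := le_antisymm (hL0 ▸ hs.2) hs.1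
    subst hs0
    refine ⟨?_, ?_, ?_⟩
    · intro φ
      rw [he₁0', he₁0', he₁0']
      apply E3_ext <;>
        simp [E3_add_apply, E3_smul_apply, Real.cos_pi_div_two, Real.sin_pi_div_two]
    · rw [hc'0', he₁0', he₁0']
      apply E3_ext <;>
        simp [cross3_apply0, cross3_apply1, cross3_apply2, Real.cos_pi_div_two,
          Real.sin_pi_div_two]
    · rw [hc'0', he₁0', he₁0']
      apply E3_ext <;>
        simp [cross3_apply0, cross3_apply1, cross3_apply2, E3_neg_apply, Real.cos_pi_div_two,
          Real.sin_pi_div_two]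
  · -- L > 0
    have hc'contOn : ContinuousOn c' (Set.Icc 0 L) :=
      fun t ht => (hc' t ht).continuousAt.continuousWithinAt
    have hbb : ∀ t ∈ Set.Icc 0 L, ⟪c' t, c' t⟫ = 1 := by
      intro t ht
      rw [real_inner_self_eq_norm_mul_norm, hunit t ht, one_mul]
    have hC : ∀ t ∈ Set.Icc 0 L, ⟪c'' t, c' t⟫ = 0 := by
      intro t ht
      have h1 : HasDerivWithinAt (fun x => ⟪c' x, c' x⟫)
          (⟪c' t, c'' t⟫ + ⟪c'' t, c' t⟫) (Set.Icc 0 L) t :=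
        (HasDerivAt.inner ℝ (hc' t ht) (hc' t ht)).hasDerivWithinAt
      have h2 : HasDerivWithinAt (fun x => ⟪c' x, c' x⟫) 0 (Set.Icc 0 L) t := by
        apply (hasDerivWithinAt_const t _ (1:ℝ)).congr
        · intro y hy; exact hbb y hy
        · exact hbb t ht
      have heq := (uniqueDiffOn_Icc hL0 t ht).eq_deriv _ h1 h2
      have hcomm : ⟪c' t, c'' t⟫ = ⟪c'' t, c' t⟫ := real_inner_comm _ _
      linarith [heq, hcomm]
    have hD : ∀ θ' : ℝ, ∀ t ∈ Set.Icc 0 L, ⟪c' t, e₁ θ' t⟫ = 0 := by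
      intro θ'
      have hcont : ContinuousOn (fun x => ⟪c' x, e₁ θ' x⟫) (Set.Icc 0 L) := fun t ht =>
        (HasDerivAt.inner ℝ (hc' t ht) (he₁ θ' t ht)).continuousAt.continuousWithinAt
      have hder : ∀ t ∈ Set.Ico (0:ℝ) L,
          HasDerivWithinAt (fun x => ⟪c' x, e₁ θ' x⟫) 0 (Set.Ici t) t := by
        intro t ht
        have ht' := Set.Ico_subset_Icc_self ht
        have h1 := HasDerivAt.inner ℝ (hc' t ht') (he₁ θ' t ht')
        have hval : ⟪c' t, -⟪c'' t, e₁ θ' t⟫ • c' t⟫ + ⟪c'' t, e₁ θ' t⟫ = 0 := by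
          rw [real_inner_smul_right, hbb t ht']
          ring
        rw [hval] at h1
        exact h1.hasDerivWithinAt
      have hconst := constant_of_has_deriv_right_zero hcont hder
      intro t ht
      rw [hconst t ht, hc'0', he₁0', inner3]
      norm_num
      exact Or.inr rfl
    have hE2 : ∀ θ' : ℝ, ∀ t ∈ Set.Icc 0 L,
        HasDerivAt (fun x => cross3 (c' x) (e₁ θ' x))
          (-⟪c'' t, cross3 (c' t) (e₁ θ' t)⟫ • c' t) t := by
      intro θ' t ht
      have h1 := hasDerivAt_cross3 (hc' t ht) (he₁ θ' t ht)
      have h2 : cross3 (c'' t) (e₁ θ' t) + cross3 (c' t) (-⟪c'' t, e₁ θ' t⟫ • c' t)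
          = -⟪c'' t, cross3 (c' t) (e₁ θ' t)⟫ • c' t := by
        rw [cross3_smul_right, cross3_self, smul_zero, add_zero]
        exact key_identity (c'' t) (c' t) (e₁ θ' t) (hbb t ht) (hC t ht) (hD θ' t ht)
      rw [h2] at h1
      exact h1
    have huniq := frame_ode_unique L c' c'' hc'contOn hc''cont
    refine ⟨?_, ?_, ?_⟩
    · intro φ
      have := huniq (e₁ φ)
        (fun t => Real.cos φ • e₁ 0 t + Real.sin φ • e₁ (Real.pi / 2) t)
        (he₁ φ) ?_ ?_ hs
      · exact this
      · intro t ht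
        have hone := he₁ 0 t ht
        have htwo := he₁ (Real.pi / 2) t ht
        have hsum := (hone.const_smul (Real.cos φ)).add (htwo.const_smul (Real.sin φ))
        refine hsum.congr_deriv ?_
        rw [inner_add_right, real_inner_smul_right, real_inner_smul_right]
        module
      · show e₁ φ 0 = Real.cos φ • e₁ 0 0 + Real.sin φ • e₁ (Real.pi / 2) 0
        rw [he₁0', he₁0', he₁0']
        apply E3_ext <;>
          simp [E3_add_apply, E3_smul_apply, Real.cos_pi_div_two, Real.sin_pi_div_two]
    · have := huniq (fun t => cross3 (c' t) (e₁ 0 t)) (e₁ (Real.pi / 2))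
        (hE2 0) (he₁ (Real.pi / 2)) ?_ hs
      · exact this
      · show cross3 (c' 0) (e₁ 0 0) = e₁ (Real.pi / 2) 0
        rw [hc'0', he₁0', he₁0']
        apply E3_ext <;>
          simp [cross3_apply0, cross3_apply1, cross3_apply2, Real.cos_pi_div_two,
            Real.sin_pi_div_two]
    · have := huniq (fun t => cross3 (c' t) (e₁ (Real.pi / 2) t)) (fun t => -(e₁ 0 t))
        (hE2 (Real.pi / 2)) ?_ ?_ hs
      · exact this
      · intro t ht
        have hone := (he₁ 0 t ht).neg
        refine hone.congr_deriv ?_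
        rw [inner_neg_right]
        module
      · show cross3 (c' 0) (e₁ (Real.pi / 2) 0) = -(e₁ 0 0)
        rw [hc'0', he₁0', he₁0']
        apply E3_ext <;>
          simp [cross3_apply0, cross3_apply1, cross3_apply2, E3_neg_apply, Real.cos_pi_div_two,
            Real.sin_pi_div_two]
end

section
/- Let c : [0,L] → ℝ³ be twice continuously differentiable with ‖c'(s)‖ = 1 for all s and c'(0) = (0,0,1). Suppose e₁ : ℝ × [0,L] → ℝ³ is such that for every θ the map s ↦ e₁(θ,s) is differentiable, solves the frame ODE ∂ₛe₁(θ,s) = -(c''(s)·e₁(θ,s)) c'(s), and satisfies e₁(θ,0) = (cos θ, sin θ, 0); set e₂(θ,s) = c'(s) × e₁(θ,s). Then there exists a map R : [0,L] → Matrix(3,3,ℝ) such that each R(s) is orthogonal with det R(s) = 1, and for all θ and all s ∈ [0,L]: e₁(θ,s) = R(s) e₁(θ,0), e₂(θ,s) = R(s) e₂(θ,0), and c'(s) = R(s) c'(0). -/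
open scoped RealInnerProductSpace Matrix

/-- For `R` orthogonal with `det R = 1`, `R` commutes with the cross product. -/
lemma rot_cross (R : Matrix (Fin 3) (Fin 3) ℝ) (hR : Rᵀ * R = 1) (hdet : R.det = 1)
    (a b : EuclideanSpace ℝ (Fin 3)) :
    R.mulVec (cross3 a b) = cross3 (WithLp.toLp 2 (R.mulVec a)) (WithLp.toLp 2 (R.mulVec b)) := by
  have h1 : Rᵀ.mulVec (cross3 (WithLp.toLp 2 (R.mulVec a)) (WithLp.toLp 2 (R.mulVec b))) = R.det • cross3 a b := by
    funext i
    fin_cases i <;>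
      simp [cross3, Matrix.mulVec, dotProduct, Matrix.det_fin_three,
        Matrix.transpose_apply, Fin.sum_univ_three, PiLp.smul_apply, smul_eq_mul] <;> ring
  have h2 : R * Rᵀ = 1 := mul_eq_one_comm.mp hR
  calc R.mulVec (cross3 a b) = R.mulVec (R.det • cross3 a b) := by rw [hdet, one_smul]
    _ = R.mulVec (Rᵀ.mulVec (cross3 (WithLp.toLp 2 (R.mulVec a)) (WithLp.toLp 2 (R.mulVec b)))) := by rw [h1]
    _ = (R * Rᵀ).mulVec (cross3 (WithLp.toLp 2 (R.mulVec a)) (WithLp.toLp 2 (R.mulVec b))) := by rw [Matrix.mulVec_mulVec]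
    _ = _ := by rw [h2, Matrix.one_mulVec]

lemma ode_unique (L : ℝ) (c' c'' : ℝ → EuclideanSpace ℝ (Fin 3))
    (hc''cont : ContinuousOn c'' (Set.Icc 0 L))
    (hunit : ∀ s ∈ Set.Icc 0 L, ‖c' s‖ = 1)
    (f g : ℝ → EuclideanSpace ℝ (Fin 3))
    (hf : ∀ s ∈ Set.Icc 0 L, HasDerivAt f (-⟪c'' s, f s⟫ • c' s) s)
    (hg : ∀ s ∈ Set.Icc 0 L, HasDerivAt g (-⟪c'' s, g s⟫ • c' s) s)
    (h0 : f 0 = g 0) : ∀ s ∈ Set.Icc 0 L, f s = g s := by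
  obtain ⟨C, hC⟩ := (isCompact_Icc (a := (0:ℝ)) (b := L)).exists_bound_of_continuousOn hc''cont
  set K : NNReal := ⟨max C 0, le_max_right _ _⟩ with hK
  set v : ℝ → EuclideanSpace ℝ (Fin 3) → EuclideanSpace ℝ (Fin 3) :=
    fun t x => if t ∈ Set.Icc 0 L then -⟪c'' t, x⟫ • c' t else 0 with hv
  have hlip : ∀ t, LipschitzWith K (v t) := by
    intro t
    by_cases ht : t ∈ Set.Icc 0 L
    · apply LipschitzWith.of_dist_le_mul
      intro x y
      rw [dist_eq_norm, dist_eq_norm]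
      simp only [hv, if_pos ht]
      have : -⟪c'' t, x⟫ • c' t - -⟪c'' t, y⟫ • c' t = (-⟪c'' t, x - y⟫) • c' t := by
        rw [inner_sub_right]; module
      rw [this, norm_smul, hunit t ht, mul_one]
      calc ‖-⟪c'' t, x - y⟫‖ ≤ ‖c'' t‖ * ‖x - y‖ := by
            rw [norm_neg]; exact norm_inner_le_norm _ _
        _ ≤ (K : ℝ) * ‖x - y‖ := by
            apply mul_le_mul_of_nonneg_right _ (norm_nonneg _)
            exact le_trans (hC t ht) (le_max_left _ _)
    · simp only [hv, if_neg ht]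
      exact (LipschitzWith.const (0 : EuclideanSpace ℝ (Fin 3))).weaken (zero_le (a := K))
  have hfc : ContinuousOn f (Set.Icc 0 L) := fun s hs => ((hf s hs).continuousAt).continuousWithinAt
  have hgc : ContinuousOn g (Set.Icc 0 L) := fun s hs => ((hg s hs).continuousAt).continuousWithinAt
  intro s hs
  refine ODE_solution_unique hlip hfc (fun t ht => ?_) hgc (fun t ht => ?_) h0 hs
  · have hmem := Set.Ico_subset_Icc_self ht
    have hvv : v t (f t) = -⟪c'' t, f t⟫ • c' t := if_pos hmem
    rw [hvv]; exact (hf t hmem).hasDerivWithinAt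
  · have hmem := Set.Ico_subset_Icc_self ht
    have hvv : v t (g t) = -⟪c'' t, g t⟫ • c' t := if_pos hmem
    rw [hvv]; exact (hg t hmem).hasDerivWithinAt

/-- There is a rotation-matrix valued function `R` carrying the initial frame
`{e₁(θ,0), e₂(θ,0), c'(0)}` to the frame `{e₁(θ,s), e₂(θ,s), c'(s)}`. -/
theorem exists_rotation_of_frame
    (L : ℝ) (hL : 0 ≤ L)
    (c c' c'' : ℝ → EuclideanSpace ℝ (Fin 3))
    (e₁ : ℝ → ℝ → EuclideanSpace ℝ (Fin 3))
    (hc : ∀ s ∈ Set.Icc 0 L, HasDerivAt c (c' s) s)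
    (hc' : ∀ s ∈ Set.Icc 0 L, HasDerivAt c' (c'' s) s)
    (hc''cont : ContinuousOn c'' (Set.Icc 0 L))
    (hunit : ∀ s ∈ Set.Icc 0 L, ‖c' s‖ = 1)
    (hc'0 : c' 0 = ![(0 : ℝ), 0, 1])
    (he₁ : ∀ θ : ℝ, ∀ s ∈ Set.Icc 0 L,
      HasDerivAt (e₁ θ) (-⟪c'' s, e₁ θ s⟫ • c' s) s)
    (he₁0 : ∀ θ : ℝ, e₁ θ 0 = ![Real.cos θ, Real.sin θ, 0]) :
    ∃ R : ℝ → Matrix (Fin 3) (Fin 3) ℝ,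
      ∀ s ∈ Set.Icc 0 L,
        (R s)ᵀ * R s = 1 ∧ (R s).det = 1 ∧
          (∀ θ : ℝ, (R s).mulVec (e₁ θ 0) = e₁ θ s) ∧
          (∀ θ : ℝ, (R s).mulVec (cross3 (c' 0) (e₁ θ 0)) = cross3 (c' s) (e₁ θ s)) ∧
          (R s).mulVec (c' 0) = c' s := by
  have h0L : (0 : ℝ) ∈ Set.Icc 0 L := ⟨le_refl 0, hL⟩
  -- `⟪c' s, c' s⟫ = 1`
  have hcc : ∀ s ∈ Set.Icc 0 L, ⟪c' s, c' s⟫ = 1 := fun s hs => by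
    rw [real_inner_self_eq_norm_mul_norm, hunit s hs]; norm_num
  -- `⟪c' s, e₁ θ s⟫ = 0` on `Icc 0 L`
  have horth : ∀ θ : ℝ, ∀ s ∈ Set.Icc 0 L, ⟪c' s, e₁ θ s⟫ = 0 := by
    intro θ
    have hder : ∀ s ∈ Set.Icc 0 L,
        HasDerivAt (fun t => ⟪c' t, e₁ θ t⟫) 0 s := by
      intro s hs
      have h := (hc' s hs).inner ℝ (he₁ θ s hs)
      have heq : ⟪c' s, -⟪c'' s, e₁ θ s⟫ • c' s⟫ + ⟪c'' s, e₁ θ s⟫ = 0 := by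
        rw [real_inner_smul_right, hcc s hs]; ring
      rwa [heq] at h
    have hcont : ContinuousOn (fun t => ⟪c' t, e₁ θ t⟫) (Set.Icc 0 L) :=
      fun s hs => ((hder s hs).continuousAt).continuousWithinAt
    have hconst := constant_of_has_deriv_right_zero hcont
      (fun x hx => (hder x (Set.Ico_subset_Icc_self hx)).hasDerivWithinAt)
    intro s hs
    rw [hconst s hs]
    simp [PiLp.inner_apply, Fin.sum_univ_three, RCLike.inner_apply, hc'0, he₁0]
  -- `⟪e₁ θ s, e₁ θ' s⟫` is constant on `Icc 0 L`
  have hconst2 : ∀ θ θ' : ℝ, ∀ s ∈ Set.Icc 0 L,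
      ⟪e₁ θ s, e₁ θ' s⟫ = ⟪e₁ θ 0, e₁ θ' 0⟫ := by
    intro θ θ'
    have hder : ∀ s ∈ Set.Icc 0 L,
        HasDerivAt (fun t => ⟪e₁ θ t, e₁ θ' t⟫) 0 s := by
      intro s hs
      have h := (he₁ θ s hs).inner ℝ (he₁ θ' s hs)
      have heq : ⟪e₁ θ s, -⟪c'' s, e₁ θ' s⟫ • c' s⟫ + ⟪-⟪c'' s, e₁ θ s⟫ • c' s, e₁ θ' s⟫
          = 0 := by
        rw [real_inner_smul_right, real_inner_smul_left, real_inner_comm (c' s) (e₁ θ s),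
          horth θ s hs, horth θ' s hs]
        ring
      rwa [heq] at h
    have hcont : ContinuousOn (fun t => ⟪e₁ θ t, e₁ θ' t⟫) (Set.Icc 0 L) :=
      fun s hs => ((hder s hs).continuousAt).continuousWithinAt
    exact constant_of_has_deriv_right_zero hcont
      (fun x hx => (hder x (Set.Ico_subset_Icc_self hx)).hasDerivWithinAt)
  -- key: `e₁ θ s = cos θ • e₁ 0 s + sin θ • e₁ (π/2) s`
  have hkey : ∀ θ : ℝ, ∀ s ∈ Set.Icc 0 L,
      e₁ θ s = Real.cos θ • e₁ 0 s + Real.sin θ • e₁ (Real.pi / 2) s := by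
    intro θ
    apply ode_unique L c' c'' hc''cont hunit _ _ (he₁ θ)
    · intro s hs
      have h := ((he₁ 0 s hs).const_smul (Real.cos θ)).add
        ((he₁ (Real.pi / 2) s hs).const_smul (Real.sin θ))
      have heq : Real.cos θ • (-⟪c'' s, e₁ 0 s⟫ • c' s)
            + Real.sin θ • (-⟪c'' s, e₁ (Real.pi / 2) s⟫ • c' s)
          = -⟪c'' s, Real.cos θ • e₁ 0 s + Real.sin θ • e₁ (Real.pi / 2) s⟫ • c' s := by
        rw [inner_add_right, real_inner_smul_right, real_inner_smul_right]
        module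
      rwa [heq] at h
    · ext i
      have h0 : (e₁ 0 0).ofLp = (![1, 0, 0] : Fin 3 → ℝ) := by
        rw [he₁0]; norm_num
      have hpi : (e₁ (Real.pi / 2) 0).ofLp = (![0, 1, 0] : Fin 3 → ℝ) := by
        rw [he₁0]; norm_num
      fin_cases i <;>
        simp [he₁0, h0, hpi, PiLp.add_apply, PiLp.smul_apply, smul_eq_mul]
  -- the rotation matrix
  set R : ℝ → Matrix (Fin 3) (Fin 3) ℝ :=
    fun s => Matrix.of fun i j => ![e₁ 0 s, e₁ (Real.pi / 2) s, c' s] j i with hRdef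
  -- component-level orthonormality facts
  have comp : ∀ (x y : EuclideanSpace ℝ (Fin 3)) (r : ℝ), ⟪x, y⟫ = r →
      x 0 * y 0 + x 1 * y 1 + x 2 * y 2 = r := by
    intro x y r h
    simp [PiLp.inner_apply, Fin.sum_univ_three, RCLike.inner_apply] at h
    linarith
  have hu0 : (e₁ 0 0).ofLp = (![1, 0, 0] : Fin 3 → ℝ) := by rw [he₁0]; norm_num
  have hv0 : (e₁ (Real.pi / 2) 0).ofLp = (![0, 1, 0] : Fin 3 → ℝ) := by
    rw [he₁0]; norm_num
  have hRtR : ∀ s ∈ Set.Icc 0 L, (R s)ᵀ * R s = 1 := by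
    intro s hs
    have f11 := comp _ _ 1 ((hconst2 0 0 s hs).trans (by
      rw [PiLp.inner_apply]; simp [hu0, PiLp.inner_apply, Fin.sum_univ_three, RCLike.inner_apply]))
    have f22 := comp _ _ 1 ((hconst2 (Real.pi / 2) (Real.pi / 2) s hs).trans (by
      rw [PiLp.inner_apply]; simp [hv0, PiLp.inner_apply, Fin.sum_univ_three, RCLike.inner_apply]))
    have f12 := comp _ _ 0 ((hconst2 0 (Real.pi / 2) s hs).trans (by
      simp [hu0, hv0, PiLp.inner_apply, Fin.sum_univ_three, RCLike.inner_apply]))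
    have f33 := comp _ _ 1 (hcc s hs)
    have f13 := comp _ _ 0 (horth 0 s hs)
    have f23 := comp _ _ 0 (horth (Real.pi / 2) s hs)
    ext i j
    fin_cases i <;> fin_cases j <;>
      simp [hRdef, Matrix.mul_apply, Matrix.transpose_apply, Matrix.one_apply,
        Fin.sum_univ_three, Matrix.of_apply]
    all_goals first
      | linear_combination f11 | linear_combination f22 | linear_combination f33
      | linear_combination f12 | linear_combination f13 | linear_combination f23
  -- determinant
  have hdet_expr : ∀ s, (R s).det =
      e₁ 0 s 0 * e₁ (Real.pi / 2) s 1 * c' s 2 - e₁ 0 s 0 * c' s 1 * e₁ (Real.pi / 2) s 2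
      - e₁ (Real.pi / 2) s 0 * e₁ 0 s 1 * c' s 2 + e₁ (Real.pi / 2) s 0 * c' s 1 * e₁ 0 s 2
      + c' s 0 * e₁ 0 s 1 * e₁ (Real.pi / 2) s 2 - c' s 0 * e₁ (Real.pi / 2) s 1 * e₁ 0 s 2 := by
    intro s
    rw [Matrix.det_fin_three]
    simp only [hRdef, Matrix.of_apply, Matrix.cons_val_zero, Matrix.cons_val_one,
      Matrix.cons_val_two, Matrix.head_cons, Matrix.tail_cons]
    try ring
  have hcomp_cont : ∀ (θ : ℝ) (i : Fin 3), ContinuousOn (fun t => e₁ θ t i) (Set.Icc 0 L) :=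
    fun θ i s hs =>
      (((PiLp.continuous_apply 2 _ i).continuousAt).comp (he₁ θ s hs).continuousAt).continuousWithinAt
  have hc'cont : ∀ i : Fin 3, ContinuousOn (fun t => c' t i) (Set.Icc 0 L) :=
    fun i s hs =>
      (((PiLp.continuous_apply 2 _ i).continuousAt).comp (hc' s hs).continuousAt).continuousWithinAt
  have hdet_cont : ContinuousOn (fun t => (R t).det) (Set.Icc 0 L) := by
    simp only [hdet_expr]
    have hA := ((hcomp_cont 0 0).mul (hcomp_cont (Real.pi / 2) 1)).mul (hc'cont 2)
    have hB := ((hcomp_cont 0 0).mul (hc'cont 1)).mul (hcomp_cont (Real.pi / 2) 2)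
    have hC := ((hcomp_cont (Real.pi / 2) 0).mul (hcomp_cont 0 1)).mul (hc'cont 2)
    have hD := ((hcomp_cont (Real.pi / 2) 0).mul (hc'cont 1)).mul (hcomp_cont 0 2)
    have hE := ((hc'cont 0).mul (hcomp_cont 0 1)).mul (hcomp_cont (Real.pi / 2) 2)
    have hF := ((hc'cont 0).mul (hcomp_cont (Real.pi / 2) 1)).mul (hcomp_cont 0 2)
    exact ((((hA.sub hB).sub hC).add hD).add hE).sub hF
  have hsq : ∀ s ∈ Set.Icc 0 L, (R s).det ^ 2 = 1 := by
    intro s hs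
    have h := congrArg Matrix.det (hRtR s hs)
    rwa [Matrix.det_mul, Matrix.det_transpose, Matrix.det_one, ← sq] at h
  have hR0 : (R 0).det = 1 := by
    rw [hdet_expr 0, hu0, hv0, hc'0]
    norm_num
    rfl
  have hdet1 : ∀ s ∈ Set.Icc 0 L, (R s).det = 1 := by
    intro s hs
    by_contra hne
    have hneg : (R s).det = -1 := by
      have h2 := hsq s hs
      have : ((R s).det - 1) * ((R s).det + 1) = 0 := by linear_combination h2
      rcases mul_eq_zero.mp this with h | h
      · exact absurd (by linarith) hne
      · linarith
    have hsub : Set.uIcc 0 s ⊆ Set.Icc 0 L := by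
      rw [Set.uIcc_of_le hs.1]
      exact Set.Icc_subset_Icc le_rfl hs.2
    have hivt := intermediate_value_uIcc (hdet_cont.mono hsub)
    have h0mem : (0 : ℝ) ∈ Set.uIcc ((R 0).det) ((R s).det) := by
      rw [hR0, hneg, Set.uIcc_of_ge (by norm_num : (-1:ℝ) ≤ 1)]
      constructor <;> norm_num
    obtain ⟨t, ht, hdt⟩ := hivt h0mem
    have hdt' : (R t).det = 0 := hdt
    have h2 := hsq t (hsub ht)
    rw [hdt'] at h2
    norm_num at h2
  -- assembly
  refine ⟨R, fun s hs => ?_⟩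
  have hb5 : (R s).mulVec (c' 0) = c' s := by
    funext i
    simp [hRdef, Matrix.mulVec, dotProduct, Fin.sum_univ_three, hc'0, Matrix.of_apply]
  have hb3 : ∀ θ : ℝ, (R s).mulVec (e₁ θ 0) = e₁ θ s := by
    intro θ
    have hk := hkey θ s hs
    funext i
    rw [hk]
    simp [hRdef, Matrix.mulVec, dotProduct, Fin.sum_univ_three, he₁0 θ,
      PiLp.add_apply, PiLp.smul_apply, smul_eq_mul, Matrix.of_apply]
    ring
  refine ⟨hRtR s hs, hdet1 s hs, hb3, fun θ => ?_, hb5⟩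
  rw [rot_cross _ (hRtR s hs) (hdet1 s hs), hb3 θ, hb5]
end

section
/- Let c : [0,L] → ℝ³ be differentiable with tangent T = c', and let N, B : [0,L] → ℝ³ be differentiable maps such that for every s the vectors N(s) and B(s) are unit vectors with N(s)·B(s) = 0, N(s)·T(s) = 0, B(s)·T(s) = 0, and suppose there are functions κ, τ : [0,L] → ℝ with N'(s) = -κ(s)T(s) + τ(s)B(s) and B'(s) = -τ(s)N(s) (the Serret–Frenet equations). Fix r_δ > 0 and define e₁(θ,s) = cos θ · N(s) - sin θ · B(s) and S(θ,s) = c(s) + r_δ e₁(θ,s). Then for all θ and all s ∈ [0,L], ∂_θ S(θ,s) · ∂ₛ S(θ,s) = -r_δ² τ(s). -/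
open scoped RealInnerProductSpace

/-- For a Frenet frame `{T, N, B}` along a curve `c` satisfying the Serret–Frenet
equations, the pipe surface `S(θ,s) = c(s) + r_δ(cos θ N(s) - sin θ B(s))` has
`∂_θ S · ∂ₛ S = -r_δ² τ(s)`. -/
theorem pipe_surface_metric_offdiagonal
    (L : ℝ) (hL : 0 ≤ L) (rδ : ℝ) (hrδ : 0 < rδ)
    (c T N B : ℝ → EuclideanSpace ℝ (Fin 3)) (κ τ : ℝ → ℝ)
    (hc : ∀ s ∈ Set.Icc 0 L, HasDerivAt c (T s) s)
    (hNunit : ∀ s ∈ Set.Icc 0 L, ‖N s‖ = 1)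
    (hBunit : ∀ s ∈ Set.Icc 0 L, ‖B s‖ = 1)
    (hNB : ∀ s ∈ Set.Icc 0 L, ⟪N s, B s⟫ = 0)
    (hNT : ∀ s ∈ Set.Icc 0 L, ⟪N s, T s⟫ = 0)
    (hBT : ∀ s ∈ Set.Icc 0 L, ⟪B s, T s⟫ = 0)
    (hN : ∀ s ∈ Set.Icc 0 L, HasDerivAt N (-κ s • T s + τ s • B s) s)
    (hB : ∀ s ∈ Set.Icc 0 L, HasDerivAt B (-τ s • N s) s)
    (e₁ S : ℝ → ℝ → EuclideanSpace ℝ (Fin 3))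
    (he₁ : ∀ θ s, e₁ θ s = Real.cos θ • N s - Real.sin θ • B s)
    (hS : ∀ θ s, S θ s = c s + rδ • e₁ θ s) :
    ∀ θ : ℝ, ∀ s ∈ Set.Icc 0 L, ∀ Sθ Ss : EuclideanSpace ℝ (Fin 3),
      HasDerivAt (fun φ => S φ s) Sθ θ → HasDerivAt (fun t => S θ t) Ss s →
        ⟪Sθ, Ss⟫ = -(rδ ^ 2) * τ s := by
  intro θ s hs Sθ Ss hSθ hSs
  have hfun : ∀ φ t, S φ t = c t + rδ • (Real.cos φ • N t - Real.sin φ • B t) := by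
    intro φ t; rw [hS, he₁]
  -- derivative in θ
  have dθ : HasDerivAt (fun φ => S φ s)
      (rδ • ((-Real.sin θ) • N s - Real.cos θ • B s)) θ := by
    have h1 : HasDerivAt (fun φ => Real.cos φ • N s) ((-Real.sin θ) • N s) θ :=
      (Real.hasDerivAt_cos θ).smul_const (N s)
    have h2 : HasDerivAt (fun φ => Real.sin φ • B s) (Real.cos θ • B s) θ :=
      (Real.hasDerivAt_sin θ).smul_const (B s)
    have := ((h1.sub h2).const_smul rδ).const_add (c s)
    refine this.congr_of_eventuallyEq (Filter.Eventually.of_forall fun x => ?_)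
    simp [hfun]
  -- derivative in s
  have ds : HasDerivAt (fun t => S θ t)
      (T s + rδ • (Real.cos θ • (-κ s • T s + τ s • B s) - Real.sin θ • (-τ s • N s))) s := by
    have h1 := (hN s hs).const_smul (Real.cos θ)
    have h2 := (hB s hs).const_smul (Real.sin θ)
    have := (hc s hs).add ((h1.sub h2).const_smul rδ)
    refine this.congr_of_eventuallyEq (Filter.Eventually.of_forall fun x => ?_)
    simp [hfun]
  have eθ := hSθ.unique dθ
  have es := hSs.unique ds
  subst eθ es
  have hNN : ⟪N s, N s⟫ = 1 := by
    rw [real_inner_self_eq_norm_sq, hNunit s hs]; norm_num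
  have hBB : ⟪B s, B s⟫ = 1 := by
    rw [real_inner_self_eq_norm_sq, hBunit s hs]; norm_num
  have hBN : ⟪B s, N s⟫ = 0 := by rw [real_inner_comm]; exact hNB s hs
  have hTN : ⟪T s, N s⟫ = 0 := by rw [real_inner_comm]; exact hNT s hs
  have hTB : ⟪T s, B s⟫ = 0 := by rw [real_inner_comm]; exact hBT s hs
  simp only [inner_add_left, inner_add_right, inner_sub_left, inner_sub_right,
    real_inner_smul_left, real_inner_smul_right,
    hNN, hBB, hBN, hNB s hs, hNT s hs, hBT s hs, hTN, hTB]
  linear_combination (-(rδ ^ 2 * τ s)) * Real.sin_sq_add_cos_sq θ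
end

section
/- Let R > 0 and let u : ℝ² → ℝ be continuous on the closed exterior region {x ∈ ℝ² : ‖x‖ ≥ R}, twice continuously differentiable with Δu = ∂₁²u + ∂₂²u = 0 on the open exterior {‖x‖ > R}, equal to 0 on the circle {‖x‖ = R}, and satisfying u(x) → 0 as ‖x‖ → ∞. Then u(x) = 0 for all x with ‖x‖ ≥ R. -/
open Set Filter Topology

/-- 1D second derivative test: at a local max, if `g'` is the derivative of `g` near `0`
and `g'` has derivative `c` at `0`, then `c ≤ 0`. -/
lemma second_deriv_nonpos_of_isLocalMax {g g' : ℝ → ℝ} {ε c : ℝ} (hε : 0 < ε)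
    (hg : ∀ t ∈ Ioo (-ε) ε, HasDerivAt g (g' t) t)
    (hg' : HasDerivAt g' c 0) (hmax : IsLocalMax g 0) : c ≤ 0 := by
  by_contra hc
  push_neg at hc
  have h0 : (0:ℝ) ∈ Ioo (-ε) ε := ⟨by linarith, hε⟩
  have hg0 : g' 0 = 0 := by
    have := hmax.deriv_eq_zero
    rw [(hg 0 h0).deriv] at this; exact this
  -- slope of g' at 0 tends to c > 0, so g' t > 0 for small t > 0
  have hslope : Tendsto (fun t => g' t / t) (𝓝[>] (0:ℝ)) (𝓝 c) := by
    have := hasDerivAt_iff_tendsto_slope.1 hg'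
    have h2 := this.mono_left (nhdsWithin_mono _ (fun t (ht : t ∈ Ioi 0) => ne_of_gt ht))
    refine h2.congr ?_
    intro t; rw [slope_def_field, hg0]; ring
  have hpos : ∀ᶠ t in 𝓝[>] (0:ℝ), 0 < g' t := by
    filter_upwards [hslope.eventually (eventually_gt_nhds hc), self_mem_nhdsWithin] with t ht ht'
    have htpos : (0:ℝ) < t := ht'
    have := mul_pos ht htpos
    rwa [div_mul_cancel₀ _ (ne_of_gt htpos)] at this
  -- get η
  obtain ⟨η₀, hη₀pos, hη₀⟩ := (nhdsGT_basis (0:ℝ)).eventually_iff.1 hpos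
  obtain ⟨η₁, hη₁pos, hη₁⟩ := Metric.eventually_nhds_iff.1 hmax
  set η := min (min η₀ η₁) ε with hηdef
  have hη : 0 < η := by positivity
  have hsub : Ico (0:ℝ) η ⊆ Ioo (-ε) ε := by
    intro t ⟨h1, h2⟩
    exact ⟨by linarith, lt_of_lt_of_le h2 (min_le_right _ _)⟩
  have hmono : StrictMonoOn g (Ico (0:ℝ) η) := by
    apply strictMonoOn_of_deriv_pos (convex_Ico _ _)
    · intro t ht; exact ((hg t (hsub ht)).continuousAt).continuousWithinAt
    · intro t ht
      rw [interior_Ico] at ht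
      rw [(hg t (hsub (Ioo_subset_Ico_self ht))).deriv]
      exact hη₀ ⟨ht.1, lt_of_lt_of_le ht.2 ((min_le_left _ _).trans (min_le_left _ _))⟩
  have h1 : g 0 < g (η/2) := hmono ⟨le_rfl, hη⟩ ⟨by positivity, by linarith⟩ (by positivity)
  have h2 : g (η/2) ≤ g 0 := by
    apply hη₁
    simp only [dist_zero_right, Real.norm_eq_abs, abs_of_pos (by positivity : (0:ℝ) < η/2)]
    have : η ≤ η₁ := (min_le_left _ _).trans (min_le_right _ _)
    linarith
  linarith

/-- Directional second derivative test at a local max for a `C²` function on an open set. -/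
lemma fderiv_fderiv_nonpos_of_isLocalMax {E : Type*} [NormedAddCommGroup E] [NormedSpace ℝ E]
    {v : E → ℝ} {S : Set E} (hS : IsOpen S) (hv : ContDiffOn ℝ 2 v S)
    {z : E} (hz : z ∈ S) (hmax : IsLocalMax v z) (e : E) :
    fderiv ℝ (fun y => fderiv ℝ v y e) z e ≤ 0 := by
  set L : ℝ → E := fun t => z + t • e with hLdef
  have hL : ∀ t : ℝ, HasDerivAt L e t := by
    intro t
    have h1 : HasDerivAt (fun s : ℝ => s • e) ((1:ℝ) • e) t := (hasDerivAt_id t).smul_const e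
    have h2 := h1.const_add z
    rw [one_smul] at h2
    exact h2
  have hL0 : L 0 = z := by simp [hLdef]
  have hLcont : Continuous L := by continuity
  have hT : IsOpen (L ⁻¹' S) := hS.preimage hLcont
  have h0T : (0:ℝ) ∈ L ⁻¹' S := by simp [hLdef, hz]
  obtain ⟨ε, hε, hball⟩ := Metric.isOpen_iff.1 hT 0 h0T
  have hIoo : Ioo (-ε) ε ⊆ L ⁻¹' S := by
    intro t ht
    apply hball
    simp only [Metric.mem_ball, Real.dist_eq, sub_zero]
    exact abs_lt.2 ⟨ht.1, ht.2⟩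
  set w : E → ℝ := fun y => fderiv ℝ v y e with hwdef
  have hw : ContDiffOn ℝ 1 w S :=
    (hv.fderiv_of_isOpen hS (by norm_num)).clm_apply contDiffOn_const
  have hdw : DifferentiableAt ℝ w z :=
    ((hw.differentiableOn one_ne_zero).differentiableAt (hS.mem_nhds hz))
  have hg : ∀ t ∈ Ioo (-ε) ε, HasDerivAt (v ∘ L) ((w ∘ L) t) t := by
    intro t ht
    have hLt : L t ∈ S := hIoo ht
    have hvd : DifferentiableAt ℝ v (L t) :=
      (hv.differentiableOn (by norm_num)).differentiableAt (hS.mem_nhds hLt)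
    exact hvd.hasFDerivAt.comp_hasDerivAt t (hL t)
  have hg' : HasDerivAt (w ∘ L) (fderiv ℝ w z e) 0 := by
    have hdw' : HasFDerivAt w (fderiv ℝ w z) (L 0) := hL0 ▸ hdw.hasFDerivAt
    exact hdw'.comp_hasDerivAt 0 (hL 0)
  have hmax' : IsLocalMax (v ∘ L) 0 := by
    refine IsLocalMax.comp_continuous ?_ hLcont.continuousAt
    rwa [hL0]
  exact second_deriv_nonpos_of_isLocalMax hε hg hg' hmax'

noncomputable abbrev E2 := EuclideanSpace ℝ (Fin 2)

lemma q_hasFDerivAt (a : E2) :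
    HasFDerivAt (fun x : E2 => ∑ i, x i ^ 2)
      (∑ i : Fin 2, (2 * a i) • (EuclideanSpace.proj i : E2 →L[ℝ] ℝ)) a := by
  apply HasFDerivAt.fun_sum
  intro i _
  have h1 : HasFDerivAt (fun x : E2 => x i) (EuclideanSpace.proj i : E2 →L[ℝ] ℝ) a :=
    (EuclideanSpace.proj i : E2 →L[ℝ] ℝ).hasFDerivAt
  have h2 : HasFDerivAt (fun y : E2 => y i * y i)
      (a i • (EuclideanSpace.proj i : E2 →L[ℝ] ℝ) + a i • (EuclideanSpace.proj i : E2 →L[ℝ] ℝ)) a :=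
    h1.mul h1
  have h3 : (fun y : E2 => y i ^ 2) = fun y : E2 => y i * y i := by funext y; ring
  rw [h3, two_mul, add_smul]
  exact h2

lemma q_eq_norm_sq (z : E2) : ∑ i, z i ^ 2 = ‖z‖ ^ 2 := by
  rw [EuclideanSpace.norm_eq, Real.sq_sqrt (by positivity)]
  simp [Real.norm_eq_abs, sq_abs]

/-- The pure second derivatives of `a • f + δ·‖·‖²`. -/
lemma lap_shift {S : Set E2} (hS : IsOpen S) {f : E2 → ℝ} (hf : ContDiffOn ℝ 2 f S)
    (a δ : ℝ) {x : E2} (hx : x ∈ S) (i : Fin 2) :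
    fderiv ℝ (fun y => fderiv ℝ (fun z : E2 => a * f z + δ * ∑ j, z j ^ 2) y
        (EuclideanSpace.single i 1)) x (EuclideanSpace.single i 1)
      = a * fderiv ℝ (fun y => fderiv ℝ f y (EuclideanSpace.single i 1)) x
          (EuclideanSpace.single i 1) + 2 * δ := by
  set e : E2 := EuclideanSpace.single i 1 with hedef
  have hei : e i = 1 := by simp [hedef, EuclideanSpace.single_apply]
  -- differentiability of y ↦ fderiv f y e on S
  have hw : ContDiffOn ℝ 1 (fun y => fderiv ℝ f y e) S :=
    (hf.fderiv_of_isOpen hS (by norm_num)).clm_apply contDiffOn_const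
  have hdw : DifferentiableAt ℝ (fun y => fderiv ℝ f y e) x :=
    (hw.differentiableOn one_ne_zero).differentiableAt (hS.mem_nhds hx)
  -- first derivative of v on S
  have hstep : (fun y => fderiv ℝ (fun z : E2 => a * f z + δ * ∑ j, z j ^ 2) y e)
      =ᶠ[nhds x] (fun y => a * fderiv ℝ f y e + δ * (2 * y i)) := by
    filter_upwards [hS.mem_nhds hx] with y hy
    have hfd : DifferentiableAt ℝ f y :=
      (hf.differentiableOn (by norm_num)).differentiableAt (hS.mem_nhds hy)
    have hv : HasFDerivAt (fun z : E2 => a * f z + δ * ∑ j, z j ^ 2)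
        ((a • fderiv ℝ f y) + δ • (∑ j : Fin 2, (2 * y j) • (EuclideanSpace.proj j : E2 →L[ℝ] ℝ))) y :=
      (hfd.hasFDerivAt.const_mul a).add ((q_hasFDerivAt y).const_mul δ)
    rw [hv.fderiv]
    have hsum : (∑ j : Fin 2, (2 * y j) • (EuclideanSpace.proj j : E2 →L[ℝ] ℝ)) e = 2 * y i := by
      rw [ContinuousLinearMap.sum_apply]
      have hterm : ∀ j : Fin 2, ((2 * y j) • (EuclideanSpace.proj j : E2 →L[ℝ] ℝ)) e
          = if j = i then 2 * y j else 0 := by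
        intro j
        rw [ContinuousLinearMap.smul_apply, smul_eq_mul]
        simp [hedef, EuclideanSpace.single_apply, mul_ite]
      rw [Finset.sum_congr rfl (fun j _ => hterm j)]
      simp
    rw [ContinuousLinearMap.add_apply, ContinuousLinearMap.smul_apply,
      ContinuousLinearMap.smul_apply, hsum, smul_eq_mul, smul_eq_mul]
  rw [hstep.fderiv_eq]
  have hlin : HasFDerivAt (fun y : E2 => δ * (2 * y i))
      ((δ * 2) • (EuclideanSpace.proj i : E2 →L[ℝ] ℝ)) x := by
    have h1 : HasFDerivAt (fun y : E2 => y i) (EuclideanSpace.proj i : E2 →L[ℝ] ℝ) x :=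
      (EuclideanSpace.proj i : E2 →L[ℝ] ℝ).hasFDerivAt
    have := (h1.const_mul 2).const_mul δ
    simpa [smul_smul, mul_assoc] using this
  have htot : HasFDerivAt (fun y => a * fderiv ℝ f y e + δ * (2 * y i))
      ((a • fderiv ℝ (fun y => fderiv ℝ f y e) x) + (δ * 2) • (EuclideanSpace.proj i : E2 →L[ℝ] ℝ)) x :=
    (hdw.hasFDerivAt.const_mul a).add hlin
  rw [htot.fderiv]
  simp only [ContinuousLinearMap.add_apply, ContinuousLinearMap.smul_apply, smul_eq_mul]
  rw [show (EuclideanSpace.proj i : E2 →L[ℝ] ℝ) e = 1 from hei]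
  ring

/-- Uniqueness for the exterior Dirichlet problem in the plane: a function harmonic
outside the disc of radius `R`, continuous up to the boundary circle, vanishing on the
circle and tending to `0` at infinity, vanishes identically on the exterior region. -/
theorem exterior_dirichlet_uniqueness
    (R : ℝ) (hR : 0 < R)
    (u : EuclideanSpace ℝ (Fin 2) → ℝ)
    (hcont : ContinuousOn u {x | R ≤ ‖x‖})
    (hC2 : ContDiffOn ℝ 2 u {x | R < ‖x‖})
    (hharm : ∀ x : EuclideanSpace ℝ (Fin 2), R < ‖x‖ →
      (∑ i : Fin 2, fderiv ℝ (fun y => fderiv ℝ u y (EuclideanSpace.single i 1)) x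
        (EuclideanSpace.single i 1)) = 0)
    (hbdry : ∀ x : EuclideanSpace ℝ (Fin 2), ‖x‖ = R → u x = 0)
    (hdecay : Filter.Tendsto u (Filter.cocompact (EuclideanSpace ℝ (Fin 2))) (nhds 0)) :
    ∀ x : EuclideanSpace ℝ (Fin 2), R ≤ ‖x‖ → u x = 0 := by
  have hSopen : IsOpen {x : E2 | R < ‖x‖} := isOpen_lt continuous_const continuous_norm
  have hqcont : Continuous (fun z : E2 => ∑ j, z j ^ 2) :=
    continuous_finset_sum _ fun j _ => ((EuclideanSpace.proj j : E2 →L[ℝ] ℝ).continuous.pow 2)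
  have hqC : ContDiff ℝ 2 (fun z : E2 => ∑ j, z j ^ 2) :=
    ContDiff.sum fun j _ => ((EuclideanSpace.proj j : E2 →L[ℝ] ℝ).contDiff).pow 2
  intro x₀ hx₀
  have key : ∀ ε > 0, |u x₀| ≤ ε := by
    intro ε hε
    have h1 : ∀ᶠ y in Filter.cocompact E2, |u y| < ε := by
      have := Metric.tendsto_nhds.mp hdecay ε hε
      simpa [Real.dist_eq] using this
    obtain ⟨K, hK, hKsub⟩ := Filter.hasBasis_cocompact.eventually_iff.1 h1
    obtain ⟨r, hr⟩ := hK.isBounded.subset_closedBall 0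
    set R' : ℝ := max (max r R) ‖x₀‖ + 1 with hR'def
    have hRR' : R < R' := by
      have : R ≤ max (max r R) ‖x₀‖ := le_trans (le_max_right r R) (le_max_left _ _)
      linarith
    have hR'pos : 0 < R' := lt_trans hR hRR'
    have hx₀R' : ‖x₀‖ ≤ R' := by
      have : ‖x₀‖ ≤ max (max r R) ‖x₀‖ := le_max_right _ _
      linarith
    have hout : ∀ y : E2, R' ≤ ‖y‖ → |u y| < ε := by
      intro y hy
      apply hKsub
      intro hyK
      have h2 : ‖y‖ ≤ r := by simpa using hr hyK
      have h3 : r ≤ max (max r R) ‖x₀‖ := le_trans (le_max_left r R) (le_max_left _ _)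
      linarith
    have main : ∀ a : ℝ, |a| = 1 → ∀ δ : ℝ, 0 < δ → a * u x₀ ≤ ε + δ * R' ^ 2 := by
      intro a ha δ hδ
      set q : E2 → ℝ := fun z => ∑ j, z j ^ 2 with hqdef
      set v : E2 → ℝ := fun z => a * u z + δ * q z with hvdef
      set A : Set E2 := {y | R ≤ ‖y‖ ∧ ‖y‖ ≤ R'} with hAdef
      have hAx₀ : x₀ ∈ A := ⟨hx₀, hx₀R'⟩
      have hAclosed : IsClosed A := by
        have : A = (norm ⁻¹' Set.Icc R R' : Set E2) := by
          ext y; simp [hAdef, Set.mem_Icc]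
        rw [this]
        exact (isClosed_Icc).preimage continuous_norm
      have hAbdd : Bornology.IsBounded A := by
        apply Bornology.IsBounded.subset (Metric.isBounded_closedBall (x := (0:E2)) (r := R'))
        intro y hy; simpa using hy.2
      have hAcomp : IsCompact A := Metric.isCompact_of_isClosed_isBounded hAclosed hAbdd
      have hvcont : ContinuousOn v A :=
        (continuousOn_const.mul (hcont.mono (fun y hy => hy.1))).add
          (continuousOn_const.mul hqcont.continuousOn)
      obtain ⟨z, hzA, hzmax⟩ := hAcomp.exists_isMaxOn ⟨x₀, hAx₀⟩ hvcont
      have hvC2 : ContDiffOn ℝ 2 v {x : E2 | R < ‖x‖} :=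
        (contDiffOn_const.mul hC2).add (contDiffOn_const.mul hqC.contDiffOn)
      have hqnn : ∀ y : E2, 0 ≤ q y := by
        intro y; apply Finset.sum_nonneg; intro j _; positivity
      have hvz : v z ≤ ε + δ * R' ^ 2 := by
        rcases eq_or_lt_of_le hzA.1 with hzR | hzR
        · have hu0 : u z = 0 := hbdry z hzR.symm
          have hqz : q z = R ^ 2 := by
            show (∑ j, z j ^ 2 : ℝ) = R ^ 2
            rw [q_eq_norm_sq, ← hzR]
          have hvzeq : v z = δ * R ^ 2 := by
            show a * u z + δ * q z = δ * R ^ 2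
            rw [hu0, hqz]; ring
          rw [hvzeq]
          have hRle : R ^ 2 ≤ R' ^ 2 := by nlinarith
          nlinarith [mul_le_mul_of_nonneg_left hRle hδ.le]
        rcases eq_or_lt_of_le hzA.2 with hzR' | hzR'
        · have huz : |u z| < ε := hout z (le_of_eq hzR'.symm)
          have hqz : q z = R' ^ 2 := by
            show (∑ j, z j ^ 2 : ℝ) = R' ^ 2
            rw [q_eq_norm_sq, hzR']
          have h4 : a * u z ≤ |u z| := by
            calc a * u z ≤ |a * u z| := le_abs_self _
            _ = |u z| := by rw [abs_mul, ha, one_mul]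
          have hvzeq : v z = a * u z + δ * R' ^ 2 := by
            show a * u z + δ * q z = _
            rw [hqz]
          rw [hvzeq]
          nlinarith [abs_nonneg (u z)]
        · exfalso
          have hzS : z ∈ {x : E2 | R < ‖x‖} := hzR
          have hAnhds : A ∈ nhds z := by
            have hO : IsOpen {x : E2 | R < ‖x‖ ∧ ‖x‖ < R'} :=
              (isOpen_lt continuous_const continuous_norm).inter
                (isOpen_lt continuous_norm continuous_const)
            exact Filter.mem_of_superset (hO.mem_nhds ⟨hzR, hzR'⟩)
              (fun y hy => ⟨le_of_lt hy.1, le_of_lt hy.2⟩)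
          have hloc : IsLocalMax v z := hzmax.isLocalMax hAnhds
          have hneg : ∀ i : Fin 2,
              fderiv ℝ (fun y => fderiv ℝ v y (EuclideanSpace.single i 1)) z
                (EuclideanSpace.single i 1) ≤ 0 :=
            fun i => fderiv_fderiv_nonpos_of_isLocalMax hSopen hvC2 hzS hloc _
          have hsum : (∑ i : Fin 2,
              fderiv ℝ (fun y => fderiv ℝ v y (EuclideanSpace.single i 1)) z
                (EuclideanSpace.single i 1)) = 4 * δ := by
            have heach : ∀ i : Fin 2,
                fderiv ℝ (fun y => fderiv ℝ v y (EuclideanSpace.single i 1)) z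
                  (EuclideanSpace.single i 1)
                = a * fderiv ℝ (fun y => fderiv ℝ u y (EuclideanSpace.single i 1)) z
                    (EuclideanSpace.single i 1) + 2 * δ :=
              fun i => lap_shift hSopen hC2 a δ hzS i
            rw [Finset.sum_congr rfl (fun i _ => heach i), Finset.sum_add_distrib,
              ← Finset.mul_sum, hharm z hzR]
            simp; ring
          have hle : (∑ i : Fin 2,
              fderiv ℝ (fun y => fderiv ℝ v y (EuclideanSpace.single i 1)) z
                (EuclideanSpace.single i 1)) ≤ 0 :=
            Finset.sum_nonpos (fun i _ => hneg i)
          rw [hsum] at hle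
          linarith
      have h5 : a * u x₀ ≤ v x₀ := by
        show a * u x₀ ≤ a * u x₀ + δ * q x₀
        have := mul_nonneg (le_of_lt hδ) (hqnn x₀)
        linarith
      have h6 : v x₀ ≤ v z := hzmax hAx₀
      linarith
    have habs : ∀ δ : ℝ, 0 < δ → |u x₀| ≤ ε + δ * R' ^ 2 := by
      intro δ hδ
      rcases abs_cases (u x₀) with ⟨h, _⟩ | ⟨h, _⟩
      · rw [h]
        have := main 1 (by norm_num) δ hδ
        linarith
      · rw [h]
        have := main (-1) (by norm_num) δ hδ
        linarith
    refine le_of_forall_pos_le_add ?_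
    intro ε' hε'
    have hδ : 0 < ε' / R' ^ 2 := by positivity
    have := habs _ hδ
    rw [div_mul_cancel₀ _ (by positivity : R' ^ 2 ≠ 0)] at this
    linarith
  have h0 : |u x₀| ≤ 0 := by
    refine le_of_forall_pos_le_add ?_
    intro ε hε
    simpa using key ε hε
  exact abs_nonpos_iff.mp h0
end
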